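/- Let V be a finite-dimensional real inner product space and g ∈ ℝ with |g| < 2; set h = √(1 − g²/4). For a vector c ∈ V and y ∈ V define b_c(y) = ⟨c,y⟩, q_c(y) = √(‖y‖² − ⟨c,y⟩²), A_c(y) = ⟨c,y⟩ + (g/2)q_c(y), B_c(y) = ⟨c,y⟩² + g⟨c,y⟩q_c(y) + q_c(y)², and Λ(c; y₁,y₂) = (A_c(y₁)A_c(y₂) + h²(⟨y₁,y₂⟩ − ⟨c,y₁⟩⟨c,y₂⟩))/√(B_c(y₁)B_c(y₂)). Fix y₁, y₂ and a point c = b where q_b(y₁) > 0, q_b(y₂) > 0, B_b(y₁) > 0, B_b(y₂) > 0. Then c ↦ Λ(c; y₁,y₂) is differentiable at b and its derivative applied to w ∈ V equals c₁·⟨y₁,w⟩ + c₂·⟨y₂,w⟩, where c₁ = (g/(2q₁))·[(q₁q₂ − b₁b₂ + (g/2)(q₁b₂ − q₂b₁))/√(B₁B₂) − λ(q₁² − b₁²)/B₁], c₂ is obtained from c₁ by interchanging the subscripts 1 and 2, and qₐ = q_b(yₐ), bₐ = ⟨b,yₐ⟩, Bₐ = B_b(yₐ) for a = 1,2, λ =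 Λ(b; y₁,y₂). -/

import Mathlib

open scoped InnerProductSpace

set_option maxHeartbeats 2000000 in
/-- The Finsleroid quantity `Λ(c; y₁, y₂)`, regarded as a function of the
Finsleroid-axis vector `c` with the tangent vectors `y₁, y₂` fixed, is differentiable
at an axis point `b` where `q_b(y₁), q_b(y₂), B_b(y₁), B_b(y₂) > 0`, and its derivative
applied to `w` equals `c₁·⟨y₁,w⟩ + c₂·⟨y₂,w⟩` with the stated coefficients
`c₁ = (g/(2q₁))·[(q₁q₂ − b₁b₂ + (g/2)(q₁b₂ − q₂b₁))/√(B₁B₂) − λ(q₁² − b₁²)/B₁]`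
and `c₂` obtained from `c₁` by interchanging the subscripts 1 and 2. -/
theorem finsleroid_lambda_axis_derivative
    {V : Type*} [NormedAddCommGroup V] [InnerProductSpace ℝ V] [FiniteDimensional ℝ V]
    (g h : ℝ) (hg : |g| < 2) (hh : h = Real.sqrt (1 - g ^ 2 / 4))
    (qc Ac Bc : V → V → ℝ) (Lam : V → V → V → ℝ)
    (hqc : ∀ c y : V, qc c y = Real.sqrt (‖y‖ ^ 2 - ⟪c, y⟫_ℝ ^ 2))
    (hAc : ∀ c y : V, Ac c y = ⟪c, y⟫_ℝ + (g / 2) * qc c y)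
    (hBc : ∀ c y : V, Bc c y = ⟪c, y⟫_ℝ ^ 2 + g * ⟪c, y⟫_ℝ * qc c y + qc c y ^ 2)
    (hLam : ∀ c y₁ y₂ : V,
      Lam c y₁ y₂ = (Ac c y₁ * Ac c y₂ + h ^ 2 * (⟪y₁, y₂⟫_ℝ - ⟪c, y₁⟫_ℝ * ⟪c, y₂⟫_ℝ))
        / Real.sqrt (Bc c y₁ * Bc c y₂))
    (y₁ y₂ b : V)
    (hq₁ : 0 < qc b y₁) (hq₂ : 0 < qc b y₂)
    (hB₁ : 0 < Bc b y₁) (hB₂ : 0 < Bc b y₂)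
    (q₁ q₂ b₁ b₂ B₁ B₂ lam c₁ c₂ : ℝ)
    (hq₁' : q₁ = qc b y₁) (hq₂' : q₂ = qc b y₂)
    (hb₁ : b₁ = ⟪b, y₁⟫_ℝ) (hb₂ : b₂ = ⟪b, y₂⟫_ℝ)
    (hB₁' : B₁ = Bc b y₁) (hB₂' : B₂ = Bc b y₂)
    (hlam' : lam = Lam b y₁ y₂)
    (hc₁ : c₁ = (g / (2 * q₁))
      * ((q₁ * q₂ - b₁ * b₂ + (g / 2) * (q₁ * b₂ - q₂ * b₁)) / Real.sqrt (B₁ * B₂)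
          - lam * (q₁ ^ 2 - b₁ ^ 2) / B₁))
    (hc₂ : c₂ = (g / (2 * q₂))
      * ((q₂ * q₁ - b₂ * b₁ + (g / 2) * (q₂ * b₁ - q₁ * b₂)) / Real.sqrt (B₂ * B₁)
          - lam * (q₂ ^ 2 - b₂ ^ 2) / B₂)) :
    DifferentiableAt ℝ (fun c => Lam c y₁ y₂) b ∧
      ∀ w : V, fderiv ℝ (fun c => Lam c y₁ y₂) b w = c₁ * ⟪y₁, w⟫_ℝ + c₂ * ⟪y₂, w⟫_ℝ := by
  -- basic facts
  have hg4 : 0 < 1 - g ^ 2 / 4 := by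
    have h1 := abs_lt.mp hg
    nlinarith [h1.1, h1.2]
  have hh2 : h ^ 2 = 1 - g ^ 2 / 4 := by rw [hh, Real.sq_sqrt hg4.le]
  have harg₁ : 0 < ‖y₁‖ ^ 2 - ⟪b, y₁⟫_ℝ ^ 2 := by
    have := hq₁; rw [hqc] at this; exact Real.sqrt_pos.mp this
  have harg₂ : 0 < ‖y₂‖ ^ 2 - ⟪b, y₂⟫_ℝ ^ 2 := by
    have := hq₂; rw [hqc] at this; exact Real.sqrt_pos.mp this
  have eq₁ : Real.sqrt (‖y₁‖ ^ 2 - ⟪b, y₁⟫_ℝ ^ 2) = q₁ := by rw [hq₁', hqc]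
  have eq₂ : Real.sqrt (‖y₂‖ ^ 2 - ⟪b, y₂⟫_ℝ ^ 2) = q₂ := by rw [hq₂', hqc]
  have hq₁pos : 0 < q₁ := hq₁' ▸ hq₁
  have hq₂pos : 0 < q₂ := hq₂' ▸ hq₂
  have hB₁pos : 0 < B₁ := hB₁' ▸ hB₁
  have hB₂pos : 0 < B₂ := hB₂' ▸ hB₂
  have hB₁e : B₁ = b₁ ^ 2 + g * b₁ * q₁ + q₁ ^ 2 := by
    rw [hB₁', hBc, ← hb₁, ← hq₁']
  have hB₂e : B₂ = b₂ ^ 2 + g * b₂ * q₂ + q₂ ^ 2 := by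
    rw [hB₂', hBc, ← hb₂, ← hq₂']
  set S : ℝ := Real.sqrt (B₁ * B₂) with hSdef
  have hSpos : 0 < S := Real.sqrt_pos.mpr (by positivity)
  have hSsq : S ^ 2 = B₁ * B₂ := Real.sq_sqrt (by positivity)
  have hlamS : lam = ((b₁ + g / 2 * q₁) * (b₂ + g / 2 * q₂)
      + h ^ 2 * (⟪y₁, y₂⟫_ℝ - b₁ * b₂)) / S := by
    rw [hlam', hLam, hAc, hAc, ← hB₁', ← hB₂', ← hq₁', ← hq₂', ← hb₁, ← hb₂]
  -- the function rewritten explicitly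
  have hfun : (fun c => Lam c y₁ y₂) = fun c : V =>
      ((⟪c, y₁⟫_ℝ + g / 2 * Real.sqrt (‖y₁‖ ^ 2 - ⟪c, y₁⟫_ℝ ^ 2)) *
        (⟪c, y₂⟫_ℝ + g / 2 * Real.sqrt (‖y₂‖ ^ 2 - ⟪c, y₂⟫_ℝ ^ 2))
        + h ^ 2 * (⟪y₁, y₂⟫_ℝ - ⟪c, y₁⟫_ℝ * ⟪c, y₂⟫_ℝ)) *
      (Real.sqrt
        ((⟪c, y₁⟫_ℝ ^ 2 + g * ⟪c, y₁⟫_ℝ * Real.sqrt (‖y₁‖ ^ 2 - ⟪c, y₁⟫_ℝ ^ 2)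
            + Real.sqrt (‖y₁‖ ^ 2 - ⟪c, y₁⟫_ℝ ^ 2) ^ 2) *
         (⟪c, y₂⟫_ℝ ^ 2 + g * ⟪c, y₂⟫_ℝ * Real.sqrt (‖y₂‖ ^ 2 - ⟪c, y₂⟫_ℝ ^ 2)
            + Real.sqrt (‖y₂‖ ^ 2 - ⟪c, y₂⟫_ℝ ^ 2) ^ 2)))⁻¹ := by
    funext c
    simp only [hLam, hAc, hBc, hqc, div_eq_mul_inv]
  -- derivatives of inner products
  have hinner₁ : HasFDerivAt (fun c : V => ⟪c, y₁⟫_ℝ) (innerSL ℝ y₁ : V →L[ℝ] ℝ) b := by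
    have e : (fun c : V => ⟪c, y₁⟫_ℝ) = fun c => (innerSL ℝ y₁) c := by
      funext c; simp [real_inner_comm]
    rw [e]; exact (innerSL ℝ y₁).hasFDerivAt
  have hinner₂ : HasFDerivAt (fun c : V => ⟪c, y₂⟫_ℝ) (innerSL ℝ y₂ : V →L[ℝ] ℝ) b := by
    have e : (fun c : V => ⟪c, y₂⟫_ℝ) = fun c => (innerSL ℝ y₂) c := by
      funext c; simp [real_inner_comm]
    rw [e]; exact (innerSL ℝ y₂).hasFDerivAt
  -- squares of inner products
  have hpow₁ : HasFDerivAt (fun c : V => ⟪c, y₁⟫_ℝ ^ 2)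
      ((b₁ • (innerSL ℝ y₁ : V →L[ℝ] ℝ)) + (b₁ • (innerSL ℝ y₁ : V →L[ℝ] ℝ))) b := by
    have := hinner₁.mul hinner₁
    rw [← hb₁] at this
    simpa [pow_two, Pi.mul_def] using this
  have hpow₂ : HasFDerivAt (fun c : V => ⟪c, y₂⟫_ℝ ^ 2)
      ((b₂ • (innerSL ℝ y₂ : V →L[ℝ] ℝ)) + (b₂ • (innerSL ℝ y₂ : V →L[ℝ] ℝ))) b := by
    have := hinner₂.mul hinner₂
    rw [← hb₂] at this
    simpa [pow_two, Pi.mul_def] using this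
  -- derivative of q functions
  have hqf₁ : HasFDerivAt (fun c : V => Real.sqrt (‖y₁‖ ^ 2 - ⟪c, y₁⟫_ℝ ^ 2))
      ((-(b₁ / q₁)) • (innerSL ℝ y₁ : V →L[ℝ] ℝ)) b := by
    have hbase : HasFDerivAt (fun c : V => ‖y₁‖ ^ 2 - ⟪c, y₁⟫_ℝ ^ 2)
        ((0 : V →L[ℝ] ℝ) - ((b₁ • (innerSL ℝ y₁ : V →L[ℝ] ℝ)) + (b₁ • (innerSL ℝ y₁ : V →L[ℝ] ℝ)))) b :=
      (hasFDerivAt_const _ _).sub hpow₁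
    have hs := (Real.hasDerivAt_sqrt harg₁.ne').comp_hasFDerivAt b hbase
    rw [eq₁] at hs
    refine hs.congr_fderiv ?_
    ext w
    simp only [ContinuousLinearMap.smul_apply, ContinuousLinearMap.sub_apply,
      ContinuousLinearMap.add_apply, ContinuousLinearMap.zero_apply, smul_eq_mul]
    field_simp
    ring
  have hqf₂ : HasFDerivAt (fun c : V => Real.sqrt (‖y₂‖ ^ 2 - ⟪c, y₂⟫_ℝ ^ 2))
      ((-(b₂ / q₂)) • (innerSL ℝ y₂ : V →L[ℝ] ℝ)) b := by
    have hbase : HasFDerivAt (fun c : V => ‖y₂‖ ^ 2 - ⟪c, y₂⟫_ℝ ^ 2)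
        ((0 : V →L[ℝ] ℝ) - ((b₂ • (innerSL ℝ y₂ : V →L[ℝ] ℝ)) + (b₂ • (innerSL ℝ y₂ : V →L[ℝ] ℝ)))) b :=
      (hasFDerivAt_const _ _).sub hpow₂
    have hs := (Real.hasDerivAt_sqrt harg₂.ne').comp_hasFDerivAt b hbase
    rw [eq₂] at hs
    refine hs.congr_fderiv ?_
    ext w
    simp only [ContinuousLinearMap.smul_apply, ContinuousLinearMap.sub_apply,
      ContinuousLinearMap.add_apply, ContinuousLinearMap.zero_apply, smul_eq_mul]
    field_simp
    ring
  -- squares of q functions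
  have hqp₁ : HasFDerivAt (fun c : V => Real.sqrt (‖y₁‖ ^ 2 - ⟪c, y₁⟫_ℝ ^ 2) ^ 2)
      ((-(2 * b₁)) • (innerSL ℝ y₁ : V →L[ℝ] ℝ)) b := by
    have h0 := hqf₁.mul hqf₁
    rw [eq₁] at h0
    have h1 : HasFDerivAt (fun c : V => Real.sqrt (‖y₁‖ ^ 2 - ⟪c, y₁⟫_ℝ ^ 2) ^ 2)
        ((q₁ • ((-(b₁ / q₁)) • (innerSL ℝ y₁ : V →L[ℝ] ℝ)))
          + (q₁ • ((-(b₁ / q₁)) • (innerSL ℝ y₁ : V →L[ℝ] ℝ)))) b := by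
      simpa [pow_two, Pi.mul_def] using h0
    refine h1.congr_fderiv ?_
    ext w
    simp only [ContinuousLinearMap.smul_apply, ContinuousLinearMap.add_apply, smul_eq_mul]
    field_simp
    ring
  have hqp₂ : HasFDerivAt (fun c : V => Real.sqrt (‖y₂‖ ^ 2 - ⟪c, y₂⟫_ℝ ^ 2) ^ 2)
      ((-(2 * b₂)) • (innerSL ℝ y₂ : V →L[ℝ] ℝ)) b := by
    have h0 := hqf₂.mul hqf₂
    rw [eq₂] at h0
    have h1 : HasFDerivAt (fun c : V => Real.sqrt (‖y₂‖ ^ 2 - ⟪c, y₂⟫_ℝ ^ 2) ^ 2)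
        ((q₂ • ((-(b₂ / q₂)) • (innerSL ℝ y₂ : V →L[ℝ] ℝ)))
          + (q₂ • ((-(b₂ / q₂)) • (innerSL ℝ y₂ : V →L[ℝ] ℝ)))) b := by
      simpa [pow_two, Pi.mul_def] using h0
    refine h1.congr_fderiv ?_
    ext w
    simp only [ContinuousLinearMap.smul_apply, ContinuousLinearMap.add_apply, smul_eq_mul]
    field_simp
    ring
  -- derivative of A functions
  have hAf₁ : HasFDerivAt
      (fun c : V => ⟪c, y₁⟫_ℝ + g / 2 * Real.sqrt (‖y₁‖ ^ 2 - ⟪c, y₁⟫_ℝ ^ 2))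
      ((1 - g * b₁ / (2 * q₁)) • (innerSL ℝ y₁ : V →L[ℝ] ℝ)) b := by
    refine (hinner₁.add (hqf₁.const_mul (g / 2))).congr_fderiv ?_
    ext w
    simp only [ContinuousLinearMap.smul_apply, ContinuousLinearMap.add_apply, smul_eq_mul]
    field_simp
    ring
  have hAf₂ : HasFDerivAt
      (fun c : V => ⟪c, y₂⟫_ℝ + g / 2 * Real.sqrt (‖y₂‖ ^ 2 - ⟪c, y₂⟫_ℝ ^ 2))
      ((1 - g * b₂ / (2 * q₂)) • (innerSL ℝ y₂ : V →L[ℝ] ℝ)) b := by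
    refine (hinner₂.add (hqf₂.const_mul (g / 2))).congr_fderiv ?_
    ext w
    simp only [ContinuousLinearMap.smul_apply, ContinuousLinearMap.add_apply, smul_eq_mul]
    field_simp
    ring
  -- derivative of B functions
  have hBf₁ : HasFDerivAt
      (fun c : V => ⟪c, y₁⟫_ℝ ^ 2 + g * ⟪c, y₁⟫_ℝ * Real.sqrt (‖y₁‖ ^ 2 - ⟪c, y₁⟫_ℝ ^ 2)
        + Real.sqrt (‖y₁‖ ^ 2 - ⟪c, y₁⟫_ℝ ^ 2) ^ 2)
      ((g * (q₁ ^ 2 - b₁ ^ 2) / q₁) • (innerSL ℝ y₁ : V →L[ℝ] ℝ)) b := by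
    have hmid := (hinner₁.const_mul g).mul hqf₁
    rw [eq₁, ← hb₁] at hmid
    refine ((hpow₁.add hmid).add hqp₁).congr_fderiv ?_
    ext w
    simp only [ContinuousLinearMap.smul_apply, ContinuousLinearMap.add_apply, smul_eq_mul]
    field_simp
    ring
  have hBf₂ : HasFDerivAt
      (fun c : V => ⟪c, y₂⟫_ℝ ^ 2 + g * ⟪c, y₂⟫_ℝ * Real.sqrt (‖y₂‖ ^ 2 - ⟪c, y₂⟫_ℝ ^ 2)
        + Real.sqrt (‖y₂‖ ^ 2 - ⟪c, y₂⟫_ℝ ^ 2) ^ 2)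
      ((g * (q₂ ^ 2 - b₂ ^ 2) / q₂) • (innerSL ℝ y₂ : V →L[ℝ] ℝ)) b := by
    have hmid := (hinner₂.const_mul g).mul hqf₂
    rw [eq₂, ← hb₂] at hmid
    refine ((hpow₂.add hmid).add hqp₂).congr_fderiv ?_
    ext w
    simp only [ContinuousLinearMap.smul_apply, ContinuousLinearMap.add_apply, smul_eq_mul]
    field_simp
    ring
  -- values of B functions at b
  have hB₁b : (⟪b, y₁⟫_ℝ ^ 2 + g * ⟪b, y₁⟫_ℝ * Real.sqrt (‖y₁‖ ^ 2 - ⟪b, y₁⟫_ℝ ^ 2)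
      + Real.sqrt (‖y₁‖ ^ 2 - ⟪b, y₁⟫_ℝ ^ 2) ^ 2) = B₁ := by
    rw [eq₁, ← hb₁, hB₁e]
  have hB₂b : (⟪b, y₂⟫_ℝ ^ 2 + g * ⟪b, y₂⟫_ℝ * Real.sqrt (‖y₂‖ ^ 2 - ⟪b, y₂⟫_ℝ ^ 2)
      + Real.sqrt (‖y₂‖ ^ 2 - ⟪b, y₂⟫_ℝ ^ 2) ^ 2) = B₂ := by
    rw [eq₂, ← hb₂, hB₂e]
  -- derivative of numerator
  have hNf : HasFDerivAt
      (fun c : V => (⟪c, y₁⟫_ℝ + g / 2 * Real.sqrt (‖y₁‖ ^ 2 - ⟪c, y₁⟫_ℝ ^ 2)) *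
        (⟪c, y₂⟫_ℝ + g / 2 * Real.sqrt (‖y₂‖ ^ 2 - ⟪c, y₂⟫_ℝ ^ 2))
        + h ^ 2 * (⟪y₁, y₂⟫_ℝ - ⟪c, y₁⟫_ℝ * ⟪c, y₂⟫_ℝ))
      ((((1 - g * b₁ / (2 * q₁)) * (b₂ + g / 2 * q₂) - h ^ 2 * b₂) • (innerSL ℝ y₁ : V →L[ℝ] ℝ))
        + (((1 - g * b₂ / (2 * q₂)) * (b₁ + g / 2 * q₁) - h ^ 2 * b₁) • (innerSL ℝ y₂ : V →L[ℝ] ℝ))) b := by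
    have hprod := hAf₁.mul hAf₂
    rw [eq₁, eq₂, ← hb₁, ← hb₂] at hprod
    have hmix := hinner₁.mul hinner₂
    rw [← hb₁, ← hb₂] at hmix
    refine (hprod.add (((hasFDerivAt_const (⟪y₁, y₂⟫_ℝ) b).sub hmix).const_mul (h ^ 2))).congr_fderiv ?_
    ext w
    simp only [ContinuousLinearMap.smul_apply, ContinuousLinearMap.add_apply,
      ContinuousLinearMap.sub_apply, ContinuousLinearMap.zero_apply, smul_eq_mul]
    field_simp
    ring
  -- derivative of sqrt of product of B's
  have hBBpos : 0 < (⟪b, y₁⟫_ℝ ^ 2 + g * ⟪b, y₁⟫_ℝ * Real.sqrt (‖y₁‖ ^ 2 - ⟪b, y₁⟫_ℝ ^ 2)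
      + Real.sqrt (‖y₁‖ ^ 2 - ⟪b, y₁⟫_ℝ ^ 2) ^ 2) *
      (⟪b, y₂⟫_ℝ ^ 2 + g * ⟪b, y₂⟫_ℝ * Real.sqrt (‖y₂‖ ^ 2 - ⟪b, y₂⟫_ℝ ^ 2)
      + Real.sqrt (‖y₂‖ ^ 2 - ⟪b, y₂⟫_ℝ ^ 2) ^ 2) := by
    rw [hB₁b, hB₂b]; positivity
  have hSf : HasFDerivAt
      (fun c : V => Real.sqrt
        ((⟪c, y₁⟫_ℝ ^ 2 + g * ⟪c, y₁⟫_ℝ * Real.sqrt (‖y₁‖ ^ 2 - ⟪c, y₁⟫_ℝ ^ 2)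
            + Real.sqrt (‖y₁‖ ^ 2 - ⟪c, y₁⟫_ℝ ^ 2) ^ 2) *
         (⟪c, y₂⟫_ℝ ^ 2 + g * ⟪c, y₂⟫_ℝ * Real.sqrt (‖y₂‖ ^ 2 - ⟪c, y₂⟫_ℝ ^ 2)
            + Real.sqrt (‖y₂‖ ^ 2 - ⟪c, y₂⟫_ℝ ^ 2) ^ 2)))
      (((B₂ * (g * (q₁ ^ 2 - b₁ ^ 2) / q₁) / (2 * S)) • (innerSL ℝ y₁ : V →L[ℝ] ℝ))
        + ((B₁ * (g * (q₂ ^ 2 - b₂ ^ 2) / q₂) / (2 * S)) • (innerSL ℝ y₂ : V →L[ℝ] ℝ))) b := by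
    have hprod := hBf₁.mul hBf₂
    rw [hB₁b, hB₂b] at hprod
    have hs := (Real.hasDerivAt_sqrt hBBpos.ne').comp_hasFDerivAt b hprod
    rw [hB₁b, hB₂b, ← hSdef] at hs
    refine hs.congr_fderiv ?_
    ext w
    simp only [ContinuousLinearMap.smul_apply, ContinuousLinearMap.add_apply, smul_eq_mul]
    field_simp
    ring
  -- inverse of the denominator
  have hSbne : Real.sqrt
      ((⟪b, y₁⟫_ℝ ^ 2 + g * ⟪b, y₁⟫_ℝ * Real.sqrt (‖y₁‖ ^ 2 - ⟪b, y₁⟫_ℝ ^ 2)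
          + Real.sqrt (‖y₁‖ ^ 2 - ⟪b, y₁⟫_ℝ ^ 2) ^ 2) *
       (⟪b, y₂⟫_ℝ ^ 2 + g * ⟪b, y₂⟫_ℝ * Real.sqrt (‖y₂‖ ^ 2 - ⟪b, y₂⟫_ℝ ^ 2)
          + Real.sqrt (‖y₂‖ ^ 2 - ⟪b, y₂⟫_ℝ ^ 2) ^ 2)) ≠ 0 := by
    rw [hB₁b, hB₂b, ← hSdef]; exact hSpos.ne'
  have hInv := (hasDerivAt_inv hSbne).comp_hasFDerivAt b hSf
  simp only [Function.comp_def] at hInv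
  rw [hB₁b, hB₂b, ← hSdef] at hInv
  -- full derivative
  have hD := hNf.mul hInv
  rw [hB₁b, hB₂b, ← hSdef] at hD
  rw [eq₁, eq₂, ← hb₁, ← hb₂] at hD
  have key : HasFDerivAt (fun c => Lam c y₁ y₂)
      ((c₁ • (innerSL ℝ y₁ : V →L[ℝ] ℝ)) + (c₂ • (innerSL ℝ y₂ : V →L[ℝ] ℝ))) b := by
    rw [hfun]
    refine hD.congr_fderiv ?_
    ext w
    simp only [ContinuousLinearMap.smul_apply, ContinuousLinearMap.add_apply, smul_eq_mul]
    rw [hc₁, hc₂, hlamS]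
    have hS21 : Real.sqrt (B₂ * B₁) = S := by rw [hSdef, mul_comm]
    rw [hS21]
    have hB₂S : B₂ = S ^ 2 / B₁ := by
      rw [hSsq]; field_simp
    rw [hB₂S, hh2]
    have h2ne : (2:ℝ) ≠ 0 := two_ne_zero
    field_simp [hq₁pos.ne', hq₂pos.ne', hB₁pos.ne', hSpos.ne']
    ring
  refine ⟨key.differentiableAt, fun w => ?_⟩
  rw [key.fderiv]
  simp only [ContinuousLinearMap.add_apply, ContinuousLinearMap.smul_apply,
    innerSL_apply_apply, smul_eq_mul]
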